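/- Let N ≥ 2, c > 0, t ≥ 0 an integer, and L ∈ ℝ^N. Let w ∈ Δ_N be any minimizer over the probability simplex Δ_N of the function w ↦ ⟨L, w⟩ − (√(t+1)/c)·H_B(w). Then for every i ∈ [N]: w_i ≤ exp( −c²·(L_i − min_{j∈[N]} L_j)² / (2·(t+1)) ). -/

import Mathlib

/-- The error function `erf(z) = (2/√π)∫_0^z e^{-u²} du`. -/
noncomputable def erf (z : ℝ) : ℝ :=
  2 / Real.sqrt Real.pi * ∫ u in (0 : ℝ)..z, Real.exp (-u ^ 2)

/-- `h_B(x) = x·√(2·log(1/x)) − √(π/2)·erf(√(log(1/x))) + x·(N−1)·√(π/2)` for `x ∈ (0,1]`,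
with `h_B(0) = −√(π/2)`. -/
noncomputable def hB (N : ℕ) (x : ℝ) : ℝ :=
  if x = 0 then -Real.sqrt (Real.pi / 2)
  else x * Real.sqrt (2 * Real.log (1 / x))
    - Real.sqrt (Real.pi / 2) * erf (Real.sqrt (Real.log (1 / x)))
    + x * ((N : ℝ) - 1) * Real.sqrt (Real.pi / 2)

noncomputable def HB {N : ℕ} (w : Fin N → ℝ) : ℝ := ∑ i, hB N (w i)
open MeasureTheory in
lemma integrable_gauss : Integrable (fun u : ℝ => Real.exp (-u ^ 2)) := by
  have := integrable_exp_neg_mul_sq (b := (1:ℝ)) one_pos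
  simpa using this

open MeasureTheory in
lemma erf_le_one {z : ℝ} (hz : 0 ≤ z) : erf z ≤ 1 := by
  have h2 : ∫ u in Set.Ioi (0:ℝ), Real.exp (-u^2) = Real.sqrt Real.pi / 2 := by
    have := integral_gaussian_Ioi 1
    simpa using this
  have h1 : ∫ u in (0:ℝ)..z, Real.exp (-u ^ 2) ≤ Real.sqrt Real.pi / 2 := by
    rw [intervalIntegral.integral_of_le hz, ← h2]
    apply setIntegral_mono_set integrable_gauss.integrableOn
    · filter_upwards with x using (Real.exp_pos _).le
    · exact HasSubset.Subset.eventuallyLE Set.Ioc_subset_Ioi_self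
  have hπ : (0:ℝ) < Real.sqrt Real.pi := Real.sqrt_pos.2 Real.pi_pos
  rw [erf]
  rw [div_mul_eq_mul_div, div_le_one hπ]
  nlinarith

lemma hasDerivAt_erf (z : ℝ) :
    HasDerivAt erf (2 / Real.sqrt Real.pi * Real.exp (-z ^ 2)) z := by
  have hc : Continuous fun u : ℝ => Real.exp (-u ^ 2) := by continuity
  have h := intervalIntegral.integral_hasDerivAt_right
    (f := fun u : ℝ => Real.exp (-u^2)) (a := 0) (b := z) (integrable_gauss.intervalIntegrable)
    (hc.aestronglyMeasurable.stronglyMeasurableAtFilter) hc.continuousAt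
  exact h.const_mul _
lemma continuous_erf : Continuous erf :=
  continuous_iff_continuousAt.2 fun z => (hasDerivAt_erf z).continuousAt

lemma contOn_hB (N : ℕ) : ContinuousOn (hB N) (Set.Ioi (0:ℝ)) := by
  have heq : Set.EqOn (hB N) (fun x : ℝ => x * Real.sqrt (2 * Real.log (1 / x))
      - Real.sqrt (Real.pi / 2) * erf (Real.sqrt (Real.log (1 / x)))
      + x * ((N : ℝ) - 1) * Real.sqrt (Real.pi / 2)) (Set.Ioi 0) := by
    intro x hx
    rw [hB, if_neg (ne_of_gt hx)]
  apply ContinuousOn.congr _ heq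
  intro x hx
  have hx0 : x ≠ 0 := ne_of_gt hx
  have hlog : ContinuousAt (fun y : ℝ => Real.log (1 / y)) x := by
    apply (Real.continuousAt_log (by simpa using hx0)).comp
    exact ContinuousAt.div continuousAt_const continuousAt_id hx0
  have cA : ContinuousAt (fun y : ℝ => y * Real.sqrt (2 * Real.log (1 / y))) x :=
    continuousAt_id.mul (Real.continuous_sqrt.continuousAt.comp (continuousAt_const.mul hlog))
  have cE : ContinuousAt (fun y : ℝ => erf (Real.sqrt (Real.log (1 / y)))) x :=
    continuous_erf.continuousAt.comp (Real.continuous_sqrt.continuousAt.comp hlog)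
  exact (((cA.sub (continuousAt_const.mul cE)).add
    ((continuousAt_id.mul continuousAt_const).mul continuousAt_const))).continuousWithinAt

lemma hasDerivAt_hB (N : ℕ) {x : ℝ} (hx : x ∈ Set.Ioo (0:ℝ) 1) :
    HasDerivAt (hB N)
      (Real.sqrt (2 * Real.log (1 / x)) + ((N : ℝ) - 1) * Real.sqrt (Real.pi / 2)) x := by
  obtain ⟨hx0, hx1⟩ := hx
  set u : ℝ := Real.log (1 / x) with hu_def
  have hufun : (fun y : ℝ => Real.log (1 / y)) = fun y : ℝ => -Real.log y := by
    funext y; rw [one_div, Real.log_inv]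
  have hu_pos : 0 < u := by
    rw [hu_def]
    apply Real.log_pos
    rw [lt_one_div (by norm_num) hx0]; simpa using hx1
  have hlog : HasDerivAt (fun y : ℝ => Real.log (1 / y)) (-x⁻¹) x := by
    rw [hufun]
    exact (Real.hasDerivAt_log (ne_of_gt hx0)).neg
  have h2u : (2:ℝ) * u ≠ 0 := by positivity
  have hsq2 : HasDerivAt (fun y : ℝ => Real.sqrt (2 * Real.log (1 / y)))
      (1 / (2 * Real.sqrt (2 * u)) * (2 * -x⁻¹)) x :=
    (Real.hasDerivAt_sqrt h2u).comp x (hlog.const_mul 2)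
  have hA : HasDerivAt (fun y : ℝ => y * Real.sqrt (2 * Real.log (1 / y)))
      (1 * Real.sqrt (2 * u) + x * (1 / (2 * Real.sqrt (2 * u)) * (2 * -x⁻¹))) x :=
    (hasDerivAt_id x).mul hsq2
  have hsqu : HasDerivAt (fun y : ℝ => Real.sqrt (Real.log (1 / y)))
      (1 / (2 * Real.sqrt u) * -x⁻¹) x :=
    (Real.hasDerivAt_sqrt (ne_of_gt hu_pos)).comp x hlog
  have hE : HasDerivAt (fun y : ℝ => erf (Real.sqrt (Real.log (1 / y))))
      (2 / Real.sqrt Real.pi * Real.exp (-(Real.sqrt u) ^ 2) * (1 / (2 * Real.sqrt u) * -x⁻¹)) x :=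
    (hasDerivAt_erf _).comp x hsqu
  have hC : HasDerivAt (fun y : ℝ => y * ((N : ℝ) - 1) * Real.sqrt (Real.pi / 2))
      (1 * ((N : ℝ) - 1) * Real.sqrt (Real.pi / 2)) x :=
    ((hasDerivAt_id x).mul_const _).mul_const _
  have htot := (hA.sub (hE.const_mul (Real.sqrt (Real.pi / 2)))).add hC
  have hev : (fun y : ℝ => y * Real.sqrt (2 * Real.log (1 / y))
      - Real.sqrt (Real.pi / 2) * erf (Real.sqrt (Real.log (1 / y)))
      + y * ((N : ℝ) - 1) * Real.sqrt (Real.pi / 2)) =ᶠ[nhds x] hB N := by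
    filter_upwards [eventually_ne_nhds (ne_of_gt hx0)] with y hy
    rw [hB, if_neg hy]
  have htot' := htot.congr_of_eventuallyEq hev.symm
  refine htot'.congr_deriv (Eq.symm ?_)
  have hexp : Real.exp (-(Real.sqrt u) ^ 2) = x := by
    rw [Real.sq_sqrt hu_pos.le, hu_def, one_div, Real.log_inv, neg_neg, Real.exp_log hx0]
  rw [hexp]
  have hsu : Real.sqrt (2 * u) = Real.sqrt 2 * Real.sqrt u := Real.sqrt_mul (by norm_num) u
  have hsp : Real.sqrt (Real.pi / 2) = Real.sqrt Real.pi / Real.sqrt 2 :=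
    Real.sqrt_div Real.pi_pos.le 2
  have h2 : Real.sqrt 2 ≠ 0 := by positivity
  have hπ : Real.sqrt Real.pi ≠ 0 := by positivity
  have hsu0 : Real.sqrt u ≠ 0 := by positivity
  rw [hsu, hsp]
  field_simp
  ring
lemma hB_sub_le (N : ℕ) {a b : ℝ} (hb : 0 < b) (hba : b ≤ a) (ha : a ≤ 1) :
    hB N a - hB N b ≤
      (Real.sqrt (2 * Real.log (1 / b)) + ((N : ℝ) - 1) * Real.sqrt (Real.pi / 2)) * (a - b) := by
  have hsub : Set.Icc b a ⊆ Set.Ioi (0:ℝ) := fun x hx => lt_of_lt_of_le hb hx.1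
  have hint : interior (Set.Icc b a) = Set.Ioo b a := interior_Icc
  have hderiv : ∀ x ∈ interior (Set.Icc b a), HasDerivAt (hB N)
      (Real.sqrt (2 * Real.log (1 / x)) + ((N : ℝ) - 1) * Real.sqrt (Real.pi / 2)) x := by
    intro x hx
    rw [hint] at hx
    exact hasDerivAt_hB N ⟨lt_trans hb hx.1, lt_of_lt_of_le hx.2 ha⟩
  apply Convex.image_sub_le_mul_sub_of_deriv_le (convex_Icc b a)
    ((contOn_hB N).mono hsub)
    (fun x hx => (hderiv x hx).differentiableAt.differentiableWithinAt)
    _ b (Set.left_mem_Icc.2 hba) a (Set.right_mem_Icc.2 hba) hba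
  intro x hx
  rw [(hderiv x hx).deriv]
  rw [hint] at hx
  have hxx : 0 < x := lt_trans hb hx.1
  apply add_le_add_left
  apply Real.sqrt_le_sqrt
  have : 1 / x ≤ 1 / b := one_div_le_one_div_of_le hb hx.1.le
  have := Real.log_le_log (by positivity) this
  linarith

lemma le_hB_sub (N : ℕ) {a b : ℝ} (ha : 0 ≤ a) (hab : a ≤ b) (hb : b ≤ 1) :
    ((N : ℝ) - 1) * Real.sqrt (Real.pi / 2) * (b - a) ≤ hB N b - hB N a := by
  rcases eq_or_lt_of_le ha with ha0 | hapos
  · -- a = 0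
    rcases eq_or_lt_of_le hab with hab0 | habpos
    · rw [← hab0]; simp
    · rw [← ha0] at habpos ⊢
      have hb0 : b ≠ 0 := ne_of_gt habpos
      rw [hB, hB, if_pos rfl, if_neg hb0]
      have h1 : 0 ≤ b * Real.sqrt (2 * Real.log (1 / b)) := by positivity
      have h2 : erf (Real.sqrt (Real.log (1 / b))) ≤ 1 := erf_le_one (Real.sqrt_nonneg _)
      have h3 : (0:ℝ) ≤ Real.sqrt (Real.pi / 2) := Real.sqrt_nonneg _
      nlinarith
  · -- 0 < a
    have hsub : Set.Icc a b ⊆ Set.Ioi (0:ℝ) := fun x hx => lt_of_lt_of_le hapos hx.1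
    have hint : interior (Set.Icc a b) = Set.Ioo a b := interior_Icc
    have hderiv : ∀ x ∈ interior (Set.Icc a b), HasDerivAt (hB N)
        (Real.sqrt (2 * Real.log (1 / x)) + ((N : ℝ) - 1) * Real.sqrt (Real.pi / 2)) x := by
      intro x hx
      rw [hint] at hx
      exact hasDerivAt_hB N ⟨lt_trans hapos hx.1, lt_of_lt_of_le hx.2 hb⟩
    apply Convex.mul_sub_le_image_sub_of_le_deriv (convex_Icc a b)
      ((contOn_hB N).mono hsub)
      (fun x hx => (hderiv x hx).differentiableAt.differentiableWithinAt)
      _ a (Set.left_mem_Icc.2 hab) b (Set.right_mem_Icc.2 hab) hab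
    intro x hx
    rw [(hderiv x hx).deriv]
    have : 0 ≤ Real.sqrt (2 * Real.log (1 / x)) := Real.sqrt_nonneg _
    linarith

lemma sum_swap_aux {N : ℕ} {i j : Fin N} (hij : i ≠ j) (F : Fin N → ℝ) (a b : ℝ) :
    ∑ k, (if k = i then a else if k = j then b else F k)
      = (∑ k, F k) + (a - F i) + (b - F j) := by
  have key : ∀ k, (if k = i then a else if k = j then b else F k)
      = F k + (if k = i then a - F k else 0) + (if k = j then b - F k else 0) := by
    intro k
    by_cases h1 : k = i
    · subst h1; simp [hij]
    · by_cases h2 : k = j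
      · subst h2; simp [h1]
      · simp [h1, h2]
  rw [Finset.sum_congr rfl fun k _ => key k]
  rw [Finset.sum_add_distrib, Finset.sum_add_distrib, Finset.sum_ite_eq',
    Finset.sum_ite_eq']
  simp
set_option maxHeartbeats 1000000 in
/-- if `w` minimizes `w ↦ ⟨L, w⟩ − (√(t+1)/c)·H_B(w)` over the probability
simplex `Δ_N` (`N ≥ 2`, `c > 0`, `t ≥ 0` an integer, `L ∈ ℝ^N`), then for every `i`,
`w_i ≤ exp(−c²·(L_i − min_j L_j)² / (2·(t+1)))`. -/
theorem stmt13 (N : ℕ) (hN : 2 ≤ N) (c : ℝ) (hc : 0 < c) (t : ℕ) (L : Fin N → ℝ)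
    (w : Fin N → ℝ) (hw : w ∈ stdSimplex ℝ (Fin N))
    (hmin : ∀ v ∈ stdSimplex ℝ (Fin N),
      (∑ i, L i * w i) - Real.sqrt ((t : ℝ) + 1) / c * HB w ≤
        (∑ i, L i * v i) - Real.sqrt ((t : ℝ) + 1) / c * HB v)
    (i : Fin N) :
    w i ≤ Real.exp (-(c ^ 2 * (L i - sInf (Set.range L)) ^ 2) / (2 * ((t : ℝ) + 1))) := by
  have hNpos : 0 < N := by omega
  haveI : Nonempty (Fin N) := ⟨⟨0, hNpos⟩⟩
  set η := Real.sqrt ((t : ℝ) + 1) / c with hη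
  have ht1 : (0:ℝ) < (t : ℝ) + 1 := by positivity
  have hηpos : 0 < η := div_pos (Real.sqrt_pos.2 ht1) hc
  have hne : (Set.range L).Nonempty := Set.range_nonempty _
  have hfin : (Set.range L).Finite := Set.finite_range L
  obtain ⟨j, hj⟩ : ∃ j, L j = sInf (Set.range L) := hne.csInf_mem hfin
  have hjle : ∀ k, L j ≤ L k := fun k => hj ▸ csInf_le hfin.bddBelow ⟨k, rfl⟩
  rw [← hj]
  by_cases hwi : w i ≤ 0
  · exact le_trans hwi (Real.exp_pos _).le
  push_neg at hwi
  have hwile : w i ≤ 1 := by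
    rw [← hw.2]
    exact Finset.single_le_sum (fun k _ => hw.1 k) (Finset.mem_univ i)
  have key : L i - L j ≤ η * Real.sqrt (2 * Real.log (1 / w i)) := by
    by_contra hK
    push_neg at hK
    have hKpos : 0 < L i - L j :=
      lt_of_le_of_lt (by positivity) hK
    have hij : i ≠ j := by
      rintro rfl; simp at hKpos
    -- choose ε
    have hcont : ContinuousAt (fun ε : ℝ => η * Real.sqrt (2 * Real.log (1 / (w i - ε)))) 0 := by
      apply ContinuousAt.mul continuousAt_const
      apply Real.continuous_sqrt.continuousAt.comp
      apply ContinuousAt.mul continuousAt_const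
      have h1 : ContinuousAt (fun ε : ℝ => 1 / (w i - ε)) 0 :=
        ContinuousAt.div continuousAt_const (continuousAt_const.sub continuousAt_id)
          (by simpa using hwi.ne')
      exact (Real.continuousAt_log (by simp [hwi.ne'])).comp h1
    have hK' : (fun ε : ℝ => η * Real.sqrt (2 * Real.log (1 / (w i - ε)))) 0 < L i - L j := by
      simpa using hK
    have hev : ∀ᶠ ε in nhds (0:ℝ),
        η * Real.sqrt (2 * Real.log (1 / (w i - ε))) < L i - L j :=
      hcont (Iio_mem_nhds hK')
    have hev2 : ∀ᶠ ε in nhds (0:ℝ), ε < w i := eventually_lt_nhds hwi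
    have hev3 : ∀ᶠ ε in nhdsWithin (0:ℝ) (Set.Ioi 0),
        (η * Real.sqrt (2 * Real.log (1 / (w i - ε))) < L i - L j ∧ ε < w i) ∧ ε ∈ Set.Ioi (0:ℝ) :=
      (((hev.and hev2).filter_mono nhdsWithin_le_nhds)).and eventually_mem_nhdsWithin
    obtain ⟨ε, ⟨hεq, hεwi⟩, hε0⟩ := hev3.exists
    rw [Set.mem_Ioi] at hε0
    set a := w i - ε with ha'
    set b := w j + ε with hb'
    have hapos : 0 < a := sub_pos.2 hεwi
    have hwij : w i + w j ≤ 1 := by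
      rw [← hw.2]
      calc w i + w j = ∑ k ∈ ({i, j} : Finset (Fin N)), w k := by
            rw [Finset.sum_insert (by simpa using hij), Finset.sum_singleton]
      _ ≤ _ := Finset.sum_le_sum_of_subset_of_nonneg (Finset.subset_univ _)
            (fun k _ _ => hw.1 k)
    have hble : b ≤ 1 := by rw [hb']; linarith
    set v : Fin N → ℝ := fun k => if k = i then a else if k = j then b else w k with hv
    have hvmem : v ∈ stdSimplex ℝ (Fin N) := by
      constructor
      · intro k
        rw [hv]
        dsimp only
        by_cases h1 : k = i
        · rw [if_pos h1]; linarith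
        · rw [if_neg h1]
          by_cases h2 : k = j
          · rw [if_pos h2]; have := hw.1 j; linarith
          · rw [if_neg h2]; exact hw.1 k
      · rw [hv]
        rw [sum_swap_aux hij w a b, hw.2, ha', hb']
        ring
    have hLsum : ∑ k, L k * v k
        = (∑ k, L k * w k) + (L i * a - L i * w i) + (L j * b - L j * w j) := by
      have hpt : ∀ k, L k * v k
          = if k = i then L i * a else if k = j then L j * b else L k * w k := by
        intro k
        rw [hv]
        dsimp only
        by_cases h1 : k = i
        · rw [if_pos h1, if_pos h1, h1]
        · rw [if_neg h1, if_neg h1]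
          by_cases h2 : k = j
          · rw [if_pos h2, if_pos h2, h2]
          · rw [if_neg h2, if_neg h2]
      rw [Finset.sum_congr rfl fun k _ => hpt k,
        sum_swap_aux hij (fun k => L k * w k) (L i * a) (L j * b)]
    have hHsum : HB v = HB w + (hB N a - hB N (w i)) + (hB N b - hB N (w j)) := by
      rw [HB, HB]
      have hpt : ∀ k, hB N (v k)
          = if k = i then hB N a else if k = j then hB N b else hB N (w k) := by
        intro k
        rw [hv]
        dsimp only
        by_cases h1 : k = i
        · rw [if_pos h1, if_pos h1]
        · rw [if_neg h1, if_neg h1]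
          by_cases h2 : k = j
          · rw [if_pos h2, if_pos h2]
          · rw [if_neg h2, if_neg h2]
      rw [Finset.sum_congr rfl fun k _ => hpt k,
        sum_swap_aux hij (fun k => hB N (w k)) (hB N a) (hB N b)]
    have hineq := hmin v hvmem
    rw [hLsum, hHsum] at hineq
    have e1 : L i * a - L i * w i = -(ε * L i) := by rw [ha']; ring
    have e2 : L j * b - L j * w j = ε * L j := by rw [hb']; ring
    have hstep : ε * (L i - L j) ≤
        η * ((hB N (w i) - hB N a) - (hB N b - hB N (w j))) := by
      rw [e1, e2] at hineq
      nlinarith [hineq]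
    have hX : hB N (w i) - hB N a ≤
        (Real.sqrt (2 * Real.log (1 / a)) + ((N : ℝ) - 1) * Real.sqrt (Real.pi / 2)) * ε := by
      have h := hB_sub_le N hapos (by rw [ha']; linarith) hwile
      have : w i - a = ε := by rw [ha']; ring
      rw [this] at h
      exact h
    have hY : ((N : ℝ) - 1) * Real.sqrt (Real.pi / 2) * ε ≤ hB N b - hB N (w j) := by
      have h := le_hB_sub N (hw.1 j) (by rw [hb']; linarith) hble
      have : b - w j = ε := by rw [hb']; ring
      rw [this] at h
      exact h
    have hfinal : ε * (L i - L j) ≤ (η * Real.sqrt (2 * Real.log (1 / a))) * ε := by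
      calc ε * (L i - L j) ≤ η * ((hB N (w i) - hB N a) - (hB N b - hB N (w j))) := hstep
      _ ≤ η * (Real.sqrt (2 * Real.log (1 / a)) * ε) := by
            apply mul_le_mul_of_nonneg_left _ hηpos.le
            nlinarith [hX, hY]
      _ = (η * Real.sqrt (2 * Real.log (1 / a))) * ε := by ring
    linarith [mul_lt_mul_of_pos_right hεq hε0, hfinal]
  -- conclude from key
  have hK0 : 0 ≤ L i - L j := sub_nonneg.2 (hjle i)
  have hlog0 : 0 ≤ Real.log (1 / w i) := Real.log_nonneg (by rw [le_div_iff₀ hwi]; linarith)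
  have hsq : (L i - L j) ^ 2 ≤ η ^ 2 * (2 * Real.log (1 / w i)) := by
    calc (L i - L j) ^ 2 ≤ (η * Real.sqrt (2 * Real.log (1 / w i))) ^ 2 :=
          pow_le_pow_left₀ hK0 key 2
    _ = η ^ 2 * (2 * Real.log (1 / w i)) := by
          rw [mul_pow, Real.sq_sqrt (by positivity)]
  have hη2 : η ^ 2 = ((t : ℝ) + 1) / c ^ 2 := by
    rw [hη, div_pow, Real.sq_sqrt ht1.le]
  have hlogwi : Real.log (w i) ≤ -(c ^ 2 * (L i - L j) ^ 2) / (2 * ((t : ℝ) + 1)) := by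
    rw [one_div, Real.log_inv] at hsq
    rw [hη2] at hsq
    rw [div_mul_eq_mul_div, le_div_iff₀ (by positivity)] at hsq
    rw [le_div_iff₀ (by positivity : (0:ℝ) < 2 * ((t:ℝ) + 1))]
    nlinarith [hsq]
  calc w i = Real.exp (Real.log (w i)) := (Real.exp_log hwi).symm
  _ ≤ _ := Real.exp_le_exp.2 hlogwi
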